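/- As n → ∞, the average-case approximation ratio of mechanism P converges to the same constant as mechanism K: lim_{n→∞} r_n(P) = (∑_{j=1}^m (E_{t∼D^j}[1/t])^{-1}) / (∑_{j=1}^m t^j_min). -/

import Mathlib

open MeasureTheory ProbabilityTheory Finset Filter

open scoped ENNReal NNReal

lemma aux_reindex {Ω : Type*} [MeasurableSpace Ω] {μ : Measure Ω} [IsProbabilityMeasure μ]
    {ι κ : Type*} {β : Type*} [mβ : MeasurableSpace β]
    {f : ι → Ω → β} (h : iIndepFun f μ) (g : κ → ι)
    (hg : Function.Injective g) :
    iIndepFun (fun k => f (g k)) μ := by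
  rw [iIndepFun_iff_measure_inter_preimage_eq_mul] at h ⊢
  intro S sets hsets
  classical
  set sets' : ι → Set β := Function.extend g sets (fun _ => Set.univ) with hsets'
  have hext : ∀ k, sets' (g k) = sets k := fun k => hg.extend_apply _ _ _
  have h1 : (⋂ k ∈ S, f (g k) ⁻¹' sets k) = ⋂ i ∈ S.image g, f i ⁻¹' sets' i := by
    rw [Finset.set_biInter_finset_image]
    exact Set.iInter₂_congr fun k _ => by rw [hext]
  have h2 : ∏ k ∈ S, μ (f (g k) ⁻¹' sets k) = ∏ i ∈ S.image g, μ (f i ⁻¹' sets' i) := by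
    rw [Finset.prod_image (fun a _ b _ hab => hg hab)]
    exact Finset.prod_congr rfl fun k _ => by rw [hext]
  rw [h1, h2]
  refine h (S.image g) ?_
  intro i hi
  obtain ⟨k, hk, rfl⟩ := Finset.mem_image.1 hi
  rw [hext]; exact hsets k hk

lemma aux_min_tendsto {Ω : Type*} [MeasureSpace Ω] [IsProbabilityMeasure (ℙ : Measure Ω)]
    (tm : ℝ) (Dj : Measure ℝ) [IsProbabilityMeasure Dj]
    (hc : ∀ δ : ℝ, 0 < δ → 0 < Dj (Set.Iic (tm + δ)))
    (Y : ℕ → Ω → ℝ) (hme : ∀ i, Measurable (Y i))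
    (hiid : iIndepFun Y ℙ)
    (hd : ∀ i, Measure.map (Y i) ℙ = Dj)
    (hlb : ∀ᵐ ω, ∀ i, tm ≤ Y i ω) :
    ∀ᵐ ω, Tendsto (fun n => ⨅ i : Fin n, Y i ω) atTop (nhds tm) := by
  have hpre : ∀ i (c : ℝ), ℙ (Y i ⁻¹' Set.Ioi c) = Dj (Set.Ioi c) := by
    intro i c
    rw [← hd i, Measure.map_apply (hme i) measurableSet_Ioi]
  -- for each k, a.s. some Y i is ≤ tm + 1/(k+1)
  have hk : ∀ k : ℕ, ∀ᵐ ω, ∃ i, Y i ω ≤ tm + 1 / (k + 1) := by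
    intro k
    set c := tm + 1 / ((k : ℝ) + 1) with hcdef
    have hq : Dj (Set.Ioi c) < 1 := by
      have h1 : Dj (Set.Ioi c) = 1 - Dj (Set.Iic c) := by
        rw [← Set.compl_Iic, measure_compl measurableSet_Iic (measure_ne_top _ _), measure_univ]
      rw [h1]
      exact ENNReal.sub_lt_self ENNReal.one_ne_top one_ne_zero
        (hc (1 / ((k : ℝ) + 1)) (by positivity)).ne'
    have hnull : ℙ (⋂ i, Y i ⁻¹' Set.Ioi c) = 0 := by
      have hle : ∀ n : ℕ, ℙ (⋂ i, Y i ⁻¹' Set.Ioi c) ≤ Dj (Set.Ioi c) ^ n := by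
        intro n
        have hsub : (⋂ i, Y i ⁻¹' Set.Ioi c) ⊆ ⋂ i ∈ Finset.range n, Y i ⁻¹' Set.Ioi c :=
          Set.subset_iInter₂ fun i _ => Set.iInter_subset _ i
        refine (measure_mono hsub).trans ?_
        rw [hiid.measure_inter_preimage_eq_mul (Finset.range n)
          (sets := fun _ => Set.Ioi c) (fun i _ => measurableSet_Ioi)]
        simp [hpre]
      have h0 : Tendsto (fun n : ℕ => Dj (Set.Ioi c) ^ n) atTop (nhds 0) :=
        ENNReal.tendsto_pow_atTop_nhds_zero_of_lt_one hq
      exact le_antisymm (ge_of_tendsto' h0 hle) zero_le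
    have : ∀ᵐ ω, ¬ ∀ i, c < Y i ω := by
      rw [ae_iff]; push_neg
      convert hnull using 2
      ext ω; simp [Set.mem_iInter]
    filter_upwards [this] with ω hω
    push_neg at hω
    obtain ⟨i, hi⟩ := hω
    exact ⟨i, hi⟩
  rw [← ae_all_iff] at hk
  filter_upwards [hlb, hk] with ω h1 h2
  rw [tendsto_order]
  constructor
  · intro a ha
    filter_upwards [eventually_ge_atTop 1] with n hn
    have : Nonempty (Fin n) := Fin.pos_iff_nonempty.1 hn
    exact lt_of_lt_of_le ha (le_ciInf fun i => h1 i)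
  · intro a ha
    obtain ⟨k, hk'⟩ := exists_nat_one_div_lt (sub_pos.2 ha)
    obtain ⟨i, hi⟩ := h2 k
    filter_upwards [eventually_ge_atTop (i + 1)] with n hn
    have hbdd : BddBelow (Set.range fun i' : Fin n => Y i' ω) := ⟨tm, by rintro x ⟨i', rfl⟩; exact h1 i'⟩
    have hle : (⨅ i' : Fin n, Y i' ω) ≤ Y i ω := ciInf_le hbdd ⟨i, by omega⟩
    calc (⨅ i' : Fin n, Y i' ω) ≤ Y i ω := hle
      _ ≤ tm + 1 / (k + 1) := hi
      _ < a := by linarith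

lemma aux_half {Ω : Type*} [MeasureSpace Ω] [IsProbabilityMeasure (ℙ : Measure Ω)]
    (Y : ℕ → Ω → ℝ) (hme : ∀ i, Measurable (Y i))
    (hiid : iIndepFun Y ℙ)
    (b p : ℝ) (hp0 : 0 < p)
    (hp : ∀ k, (ℙ (Y k ⁻¹' Set.Iic b)).toReal = p)
    (s : Finset ℕ) (hs : 1 ≤ s.card) :
    ℙ {ω | (∑ k ∈ s, if Y k ω ≤ b then (1:ℝ) else 0) < p * s.card / 2}
      ≤ ENNReal.ofReal (4 / (p ^ 2 * s.card)) := by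
  classical
  set g : ℝ → ℝ := fun x => if x ≤ b then (1:ℝ) else 0 with hg
  have hgme : Measurable g := Measurable.ite measurableSet_Iic measurable_const measurable_const
  set Z : ℕ → Ω → ℝ := fun k ω => if Y k ω ≤ b then (1:ℝ) else 0 with hZ
  have hZme : ∀ k, Measurable (Z k) := fun k => hgme.comp (hme k)
  have hZbd : ∀ k ω, ‖Z k ω‖ ≤ 1 := by
    intro k ω; simp only [hZ]; split <;> simp
  have hZmem : ∀ k, MemLp (Z k) 2 ℙ := fun k =>
    MemLp.of_bound (hZme k).aestronglyMeasurable 1 (Filter.Eventually.of_forall (hZbd k))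
  have hEZ : ∀ k, ∫ ω, Z k ω ∂ℙ = p := by
    intro k
    have h1 : (fun ω => Z k ω) = (Y k ⁻¹' Set.Iic b).indicator 1 := by
      ext ω; simp [hZ, Set.indicator_apply, Set.mem_preimage, Set.mem_Iic]
    rw [h1, integral_indicator_one ((hme k) measurableSet_Iic), measureReal_def, hp k]
  have hp1 : p ≤ 1 := by
    rw [← hp 0]
    exact ENNReal.toReal_le_of_le_ofReal zero_le_one (by simpa using prob_le_one)
  have hVarZ : ∀ k, variance (Z k) ℙ ≤ p := by
    intro k
    rw [variance_eq_sub (hZmem k)]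
    have hsq : (Z k) ^ 2 = Z k := by
      ext ω; simp only [Pi.pow_apply, hZ]; split <;> norm_num
    rw [hsq, hEZ k]
    nlinarith [hEZ k, sq_nonneg p]
  set W : Ω → ℝ := ∑ k ∈ s, Z k with hW
  have hWa : ∀ ω, W ω = ∑ k ∈ s, Z k ω := fun ω => by simp [hW]
  have hWmem : MemLp W 2 ℙ := memLp_finsetSum' s (fun k _ => hZmem k)
  have hEW : ∫ ω, W ω ∂ℙ = p * s.card := by
    calc ∫ ω, W ω ∂ℙ = ∫ ω, ∑ k ∈ s, Z k ω ∂ℙ := by simp only [hW, Finset.sum_apply]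
      _ = ∑ k ∈ s, ∫ ω, Z k ω ∂ℙ :=
          integral_finset_sum s (fun k _ => ((hZmem k).integrable one_le_two))
      _ = p * s.card := by simp [hEZ, mul_comm]
  have hVarW : variance W ℙ ≤ p * s.card := by
    have hpair : Set.Pairwise ↑s fun i j => IndepFun (Z i) (Z j) ℙ := by
      intro i _ j _ hij
      exact (hiid.indepFun hij).comp hgme hgme
    rw [hW, IndepFun.variance_sum (fun k _ => hZmem k) hpair]
    calc ∑ k ∈ s, variance (Z k) ℙ ≤ ∑ k ∈ s, p := Finset.sum_le_sum fun k _ => hVarZ k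
      _ = p * s.card := by simp [mul_comm]
  have hcard : (1:ℝ) ≤ (s.card : ℝ) := by exact_mod_cast hs
  have hc0 : 0 < p * s.card / 2 := by positivity
  have hcheb := meas_ge_le_variance_div_sq (μ := (ℙ : Measure Ω)) hWmem hc0
  refine le_trans ?_ (le_trans hcheb ?_)
  · apply measure_mono
    intro ω hω
    simp only [Set.mem_setOf_eq] at hω ⊢
    have hWω : W ω = ∑ k ∈ s, if Y k ω ≤ b then (1:ℝ) else 0 := hWa ω
    rw [hEW, abs_sub_comm, abs_of_nonneg (by rw [hWω]; linarith)]
    rw [hWω]; linarith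
  · apply ENNReal.ofReal_le_ofReal
    rw [div_le_div_iff₀ (by positivity) (by positivity)]
    nlinarith [mul_le_mul_of_nonneg_right hVarW (show (0:ℝ) ≤ p^2*(s.card:ℝ) by positivity),
      mul_le_mul_of_nonneg_right hp1 (mul_nonneg (sq_nonneg p) (sq_nonneg ((s.card:ℝ)))),
      variance_nonneg W (ℙ : Measure Ω)]

lemma aux_badprob {Ω : Type*} [MeasureSpace Ω] [IsProbabilityMeasure (ℙ : Measure Ω)]
    (Y : ℕ → Ω → ℝ) (hme : ∀ i, Measurable (Y i))
    (hiid : iIndepFun Y ℙ)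
    (b p : ℝ) (hp0 : 0 < p)
    (hp : ∀ k, (ℙ (Y k ⁻¹' Set.Iic b)).toReal = p)
    (n : ℕ) (hn : 2 ≤ n) :
    ℙ {ω | (∑ k ∈ Finset.range n, if Y k ω ≤ b then (1:ℝ) else 0) < p * ((n/2 : ℕ) : ℝ) / 2}
      ≤ ENNReal.ofReal (256 / (p ^ 4 * (n:ℝ) ^ 2)) := by
  classical
  set g : ℝ → ℝ := fun x => if x ≤ b then (1:ℝ) else 0 with hg
  have hgme : Measurable g := Measurable.ite measurableSet_Iic measurable_const measurable_const
  set Z : ℕ → Ω → ℝ := fun k ω => if Y k ω ≤ b then (1:ℝ) else 0 with hZ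
  have hZiid : iIndepFun Z ℙ := hiid.comp (fun _ => g) (fun _ => hgme)
  set h : ℕ := n / 2 with hh
  have hh1 : 1 ≤ h := by omega
  have hh2 : h ≤ n - h := by omega
  set s1 : Finset ℕ := Finset.range h with hs1
  set s2 : Finset ℕ := Finset.Ico h n with hs2
  have hcard1 : s1.card = h := Finset.card_range h
  have hcard2 : s2.card = n - h := Nat.card_Ico h n
  have hdisj : Disjoint s1 s2 := by
    rw [hs1, hs2, Finset.range_eq_Ico]
    exact Finset.Ico_disjoint_Ico_consecutive 0 h n
  set T : ℝ := p * (h : ℝ) / 2 with hT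
  set W1 : Ω → ℝ := fun ω => ∑ k ∈ s1, Z k ω with hW1
  set W2 : Ω → ℝ := fun ω => ∑ k ∈ s2, Z k ω with hW2
  -- independence of the two half-sums
  have hindep12 : IndepFun W1 W2 ℙ := by
    have h0 := hZiid.indepFun_finset s1 s2 hdisj (fun k => hgme.comp (hme k))
    have hφ1 : Measurable (fun v : (↥s1) → ℝ => ∑ i, v i) :=
      Finset.univ.measurable_sum (fun i _ => measurable_pi_apply i)
    have hφ2 : Measurable (fun v : (↥s2) → ℝ => ∑ i, v i) :=
      Finset.univ.measurable_sum (fun i _ => measurable_pi_apply i)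
    have h1 := h0.comp hφ1 hφ2
    have e1 : ((fun v : (↥s1) → ℝ => ∑ i, v i) ∘ fun a (i : ↥s1) => Z i a)
        = W1 := by
      ext a; simp only [Function.comp_apply, hW1]
      exact Finset.sum_coe_sort s1 (fun i => Z i a)
    have e2 : ((fun v : (↥s2) → ℝ => ∑ i, v i) ∘ fun a (i : ↥s2) => Z i a)
        = W2 := by
      ext a; simp only [Function.comp_apply, hW2]
      exact Finset.sum_coe_sort s2 (fun i => Z i a)
    rwa [e1, e2] at h1
  -- inclusion of the bad event into the intersection
  have hsub : {ω | (∑ k ∈ Finset.range n, Z k ω) < T} ⊆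
      (W1 ⁻¹' Set.Iio T) ∩ (W2 ⁻¹' Set.Iio T) := by
    intro ω hω
    simp only [Set.mem_setOf_eq] at hω
    have hsplit : (∑ k ∈ Finset.range n, Z k ω) = W1 ω + W2 ω := by
      rw [hW1, hW2, hs1, hs2]
      exact (Finset.sum_range_add_sum_Ico _ (by omega)).symm
    have hnn1 : 0 ≤ W1 ω := Finset.sum_nonneg fun k _ => by simp only [hZ]; positivity
    have hnn2 : 0 ≤ W2 ω := Finset.sum_nonneg fun k _ => by simp only [hZ]; positivity
    constructor <;> simp only [Set.mem_preimage, Set.mem_Iio] <;> linarith [hsplit]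
  have hprod : ℙ ((W1 ⁻¹' Set.Iio T) ∩ (W2 ⁻¹' Set.Iio T))
      = ℙ (W1 ⁻¹' Set.Iio T) * ℙ (W2 ⁻¹' Set.Iio T) :=
    hindep12.measure_inter_preimage_eq_mul _ _ measurableSet_Iio measurableSet_Iio
  have hb1 : ℙ (W1 ⁻¹' Set.Iio T) ≤ ENNReal.ofReal (4 / (p ^ 2 * h)) := by
    have haux := aux_half Y hme hiid b p hp0 hp s1 (by rw [hcard1]; omega)
    rw [hcard1] at haux
    have hset : (W1 ⁻¹' Set.Iio T) =
        {ω | (∑ k ∈ s1, if Y k ω ≤ b then (1:ℝ) else 0) < p * (h : ℝ) / 2} := by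
      ext ω; simp only [Set.mem_preimage, Set.mem_Iio, Set.mem_setOf_eq, hW1, hZ, hT]
    rw [hset]; exact haux
  have hb2 : ℙ (W2 ⁻¹' Set.Iio T) ≤ ENNReal.ofReal (4 / (p ^ 2 * h)) := by
    have h2' := aux_half Y hme hiid b p hp0 hp s2 (by rw [hcard2]; omega)
    rw [hcard2] at h2'
    have hsub2 : (W2 ⁻¹' Set.Iio T) ⊆
        {ω | (∑ k ∈ s2, if Y k ω ≤ b then (1:ℝ) else 0) < p * ((n - h : ℕ) : ℝ) / 2} := by
      intro ω hω
      simp only [Set.mem_preimage, Set.mem_Iio, hW2] at hω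
      simp only [Set.mem_setOf_eq]
      have hcast : (h : ℝ) ≤ ((n - h : ℕ) : ℝ) := by exact_mod_cast hh2
      have : p * (h:ℝ) / 2 ≤ p * ((n - h : ℕ):ℝ) / 2 := by
        have := hp0.le; gcongr
      calc (∑ k ∈ s2, if Y k ω ≤ b then (1:ℝ) else 0) < T := hω
        _ ≤ _ := this
    refine le_trans (measure_mono hsub2) (le_trans h2' ?_)
    apply ENNReal.ofReal_le_ofReal
    have hcast : (h : ℝ) ≤ ((n - h : ℕ) : ℝ) := by exact_mod_cast hh2
    have hhpos : (0:ℝ) < h := by exact_mod_cast hh1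
    gcongr
  calc ℙ {ω | (∑ k ∈ Finset.range n, if Y k ω ≤ b then (1:ℝ) else 0) < p * ((n/2 : ℕ) : ℝ) / 2}
      ≤ ℙ ((W1 ⁻¹' Set.Iio T) ∩ (W2 ⁻¹' Set.Iio T)) := measure_mono hsub
    _ = ℙ (W1 ⁻¹' Set.Iio T) * ℙ (W2 ⁻¹' Set.Iio T) := hprod
    _ ≤ ENNReal.ofReal (4 / (p ^ 2 * h)) * ENNReal.ofReal (4 / (p ^ 2 * h)) :=
        mul_le_mul' hb1 hb2
    _ = ENNReal.ofReal ((4 / (p ^ 2 * h)) * (4 / (p ^ 2 * h))) := by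
        rw [ENNReal.ofReal_mul (by positivity)]
    _ ≤ ENNReal.ofReal (256 / (p ^ 4 * (n:ℝ) ^ 2)) := by
        apply ENNReal.ofReal_le_ofReal
        have hhpos : (0:ℝ) < h := by exact_mod_cast hh1
        have hnh : (n : ℝ) ≤ 4 * (h : ℝ) := by
          have : n ≤ 4 * h := by omega
          exact_mod_cast this
        have hnpos : (0:ℝ) < n := by positivity
        rw [div_mul_div_comm, div_le_div_iff₀ (by positivity) (by positivity)]
        nlinarith [mul_le_mul_of_nonneg_left (mul_le_mul hnh hnh hnpos.le (by positivity))
          (le_of_lt (pow_pos hp0 4))]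

/-- Social cost of mechanism P on a cost vector `t`:
`SC_P(t) = ∑_k p_k^P t_k = n / (∑_k 1/t_k)` where `p_k^P = (1/t_k) / (∑_i 1/t_i)`. -/
noncomputable def SCP (n : ℕ) (t : Fin n → ℝ) : ℝ :=
  (n : ℝ) / (∑ k, 1 / t k)

set_option maxHeartbeats 2000000 in
/-- With `m ≥ 1` tasks, costs `X i j ∼ D j` mutually independent, `D j` a
probability distribution on `[tmin j, ∞)` whose CDF is positive just above `tmin j`, the
average-case approximation ratio `r_n(P) = E[(∑_j SC_P(t^j)) / (∑_j min_i t_i^j)]` of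
mechanism P converges to the same constant as mechanism K: `(∑_j (E_{t∼D^j}[1/t])⁻¹) / (∑_j tmin j)`. -/
theorem mechanismP_average_ratio_tendsto
    {Ω : Type*} [MeasureSpace Ω] [IsProbabilityMeasure (ℙ : Measure Ω)]
    (m : ℕ) (hm : 1 ≤ m)
    (tmin : Fin m → ℝ) (htmin : ∀ j, 0 < tmin j)
    (D : Fin m → Measure ℝ) (hprob : ∀ j, IsProbabilityMeasure (D j))
    (hsupp : ∀ j, D j (Set.Iio (tmin j)) = 0)
    (hcdf : ∀ j, ∀ δ : ℝ, 0 < δ → 0 < D j (Set.Iic (tmin j + δ)))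
    (X : ℕ → Fin m → Ω → ℝ)
    (hmeas : ∀ i j, Measurable (X i j))
    (hindep : iIndepFun (fun p : ℕ × Fin m => X p.1 p.2) ℙ)
    (hdist : ∀ i j, Measure.map (X i j) ℙ = D j)
    (r : ℕ → ℝ)
    (hr : ∀ n, r n = ∫ ω, (∑ j, SCP n (fun i : Fin n => X i j ω)) /
        (∑ j, ⨅ i : Fin n, X i j ω) ∂ℙ) :
    Tendsto r atTop (nhds ((∑ j, (∫ t, 1 / t ∂(D j))⁻¹) / (∑ j, tmin j))) := by
  classical
  haveI : ∀ j, IsProbabilityMeasure (D j) := hprob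
  haveI : Nonempty (Fin m) := Fin.pos_iff_nonempty.1 hm
  set f : ℕ → Ω → ℝ := fun n ω => (∑ j, SCP n (fun i : Fin n => X i j ω)) /
      (∑ j, ⨅ i : Fin n, X i j ω) with hf
  set μj : Fin m → ℝ := fun j => ∫ t, 1 / t ∂(D j) with hμj
  set Sd : ℝ := ∑ j, tmin j with hSdd
  have hSd0 : 0 < Sd := Finset.sum_pos (fun j _ => htmin j) Finset.univ_nonempty
  set L : ℝ := (∑ j, (μj j)⁻¹) / Sd with hL
  -- per-task iid families
  have hXiid : ∀ j, iIndepFun (fun i => X i j) ℙ := by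
    intro j
    exact aux_reindex hindep (fun i => (i, j)) (fun a b hab => (Prod.ext_iff.1 hab).1)
  -- a.s. lower bound
  have hlb_all : ∀ᵐ ω, ∀ (i : ℕ) (j : Fin m), tmin j ≤ X i j ω := by
    rw [ae_all_iff]
    intro i
    rw [ae_all_iff]
    intro j
    rw [ae_iff]
    have : {ω | ¬ tmin j ≤ X i j ω} = X i j ⁻¹' Set.Iio (tmin j) := by
      ext ω; simp [Set.mem_preimage, not_le]
    rw [this, ← Measure.map_apply (hmeas i j) measurableSet_Iio, hdist i j, hsupp j]
  -- the integral μj is positive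
  have hμint : ∀ j, Integrable (fun t => 1 / t) (D j) := by
    intro j
    have hb : ∀ᵐ t ∂(D j), ‖1 / t‖ ≤ (tmin j)⁻¹ := by
      have h0 : ∀ᵐ t ∂(D j), tmin j ≤ t := by
        rw [ae_iff]
        have : {t : ℝ | ¬ tmin j ≤ t} = Set.Iio (tmin j) := by ext t; simp [not_le]
        rw [this]; exact hsupp j
      filter_upwards [h0] with t ht
      rw [one_div, Real.norm_eq_abs, abs_inv, abs_of_pos (lt_of_lt_of_le (htmin j) ht)]
      exact inv_anti₀ (htmin j) ht
    exact Integrable.mono' (integrable_const _)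
      ((measurable_const.div measurable_id).aestronglyMeasurable) hb
  have hμpos : ∀ j, 0 < μj j := by
    intro j
    rw [hμj]
    have h0 : ∀ᵐ t ∂(D j), tmin j ≤ t := by
      rw [ae_iff]
      have : {t : ℝ | ¬ tmin j ≤ t} = Set.Iio (tmin j) := by ext t; simp [not_le]
      rw [this]; exact hsupp j
    have hnn : 0 ≤ᵐ[D j] (fun t => 1 / t) := by
      filter_upwards [h0] with t ht
      have := lt_of_lt_of_le (htmin j) ht
      positivity
    rw [integral_pos_iff_support_of_nonneg_ae hnn (hμint j)]
    have hsub : {t : ℝ | tmin j ≤ t} ⊆ Function.support (fun t => 1 / t) := by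
      intro t ht
      simp only [Function.mem_support, ne_eq, one_div, inv_eq_zero]
      exact ne_of_gt (lt_of_lt_of_le (htmin j) ht)
    calc (0:ℝ≥0∞) < 1 := zero_lt_one
      _ = D j {t : ℝ | tmin j ≤ t} := by
          have : D j {t : ℝ | tmin j ≤ t}ᶜ = 0 := by
            have : {t : ℝ | tmin j ≤ t}ᶜ = Set.Iio (tmin j) := by ext t; simp [not_le]
            rw [this]; exact hsupp j
          have hm' : MeasurableSet {t : ℝ | tmin j ≤ t} := measurableSet_Ici
          exact ((prob_compl_eq_zero_iff hm').1 this).symm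
      _ ≤ D j (Function.support fun t => 1 / t) := measure_mono hsub
  -- strong law for the inverses
  have hSLLN : ∀ j, ∀ᵐ ω, Tendsto (fun n => (∑ i ∈ Finset.range n, (X i j ω)⁻¹) / n)
      atTop (nhds (μj j)) := by
    intro j
    have hint : Integrable (fun ω => (X 0 j ω)⁻¹) ℙ := by
      have hb : ∀ᵐ ω, ‖(X 0 j ω)⁻¹‖ ≤ (tmin j)⁻¹ := by
        filter_upwards [hlb_all] with ω hω
        rw [Real.norm_eq_abs, abs_inv, abs_of_pos (lt_of_lt_of_le (htmin j) (hω 0 j))]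
        exact inv_anti₀ (htmin j) (hω 0 j)
      exact Integrable.mono' (integrable_const _)
        ((hmeas 0 j).inv.aestronglyMeasurable) hb
    have hindep' : Pairwise (Function.onFun (IndepFun · · ℙ) fun i ω => (X i j ω)⁻¹) := by
      intro i i' hii'
      exact ((hXiid j).indepFun hii').comp measurable_inv measurable_inv
    have hident : ∀ i, IdentDistrib (fun ω => (X i j ω)⁻¹) (fun ω => (X 0 j ω)⁻¹) ℙ ℙ := by
      intro i
      have hid : IdentDistrib (X i j) (X 0 j) ℙ ℙ :=
        ⟨(hmeas i j).aemeasurable, (hmeas 0 j).aemeasurable, by rw [hdist i j, hdist 0 j]⟩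
      exact hid.comp measurable_inv
    have h := strong_law_ae_real (fun i ω => (X i j ω)⁻¹) hint hindep' hident
    have hE : ∫ ω, (X 0 j ω)⁻¹ ∂ℙ = μj j := by
      have h1 : μj j = ∫ t, t⁻¹ ∂(D j) := by simp [hμj, one_div]
      rw [h1, ← hdist 0 j,
        integral_map (hmeas 0 j).aemeasurable measurable_inv.aestronglyMeasurable]
    rw [hE] at h
    exact h
  -- min convergence
  have hmin : ∀ j, ∀ᵐ ω, Tendsto (fun n => ⨅ i : Fin n, X i j ω) atTop (nhds (tmin j)) := by
    intro j
    refine aux_min_tendsto (tmin j) (D j) (hcdf j) (fun i => X i j)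
      (fun i => hmeas i j) (hXiid j) (fun i => hdist i j) ?_
    filter_upwards [hlb_all] with ω hω i
    exact hω i j
  -- SCP rewrite
  have hSCP : ∀ (n : ℕ) (j : Fin m) (ω : Ω), SCP n (fun i : Fin n => X i j ω)
      = ((∑ i ∈ Finset.range n, (X i j ω)⁻¹) / n)⁻¹ := by
    intro n j ω
    rw [SCP, inv_div]
    congr 1
    rw [← Fin.sum_univ_eq_sum_range (fun i => (X i j ω)⁻¹) n]
    simp [one_div]
  -- a.e. convergence of f to L
  have hae : ∀ᵐ ω, Tendsto (fun n => f n ω) atTop (nhds L) := by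
    filter_upwards [ae_all_iff.2 hSLLN, ae_all_iff.2 hmin] with ω h2 h3
    have hnum : Tendsto (fun n => ∑ j, SCP n (fun i : Fin n => X i j ω)) atTop
        (nhds (∑ j, (μj j)⁻¹)) := by
      apply tendsto_finset_sum
      intro j _
      have := (h2 j).inv₀ (hμpos j).ne'
      simp only [hSCP]
      exact this
    have hden : Tendsto (fun n => ∑ j, ⨅ i : Fin n, X i j ω) atTop (nhds Sd) := by
      rw [hSdd]
      exact tendsto_finset_sum _ (fun j _ => h3 j)
    exact (hnum.div hden hSd0.ne').congr (fun n => rfl)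
  -- measurability of f n
  have hf_meas : ∀ n, Measurable (f n) := by
    intro n
    apply Measurable.div
    · apply Finset.measurable_sum
      intro j _
      have hrw : (fun ω => SCP n (fun i : Fin n => X i j ω))
          = fun ω => (n : ℝ) / (∑ k : Fin n, 1 / X k j ω) := rfl
      rw [hrw]
      exact measurable_const.div
        (Finset.measurable_sum _ (fun k _ => measurable_const.div (hmeas k j)))
    · exact Finset.measurable_sum _ (fun j _ => Measurable.iInf (fun i => hmeas i j))
  -- pointwise bounds 0 ≤ f n ≤ n under the lower-bound event
  have h_f_bounds : ∀ (n : ℕ) (ω : Ω), (∀ i j, tmin j ≤ X i j ω) →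
      0 ≤ f n ω ∧ f n ω ≤ (n : ℝ) := by
    intro n ω hω
    rcases Nat.eq_zero_or_pos n with hn0 | hn1
    · subst hn0
      have : f 0 ω = 0 := by simp [hf, SCP]
      rw [this]; exact ⟨le_refl 0, by simp⟩
    haveI : Nonempty (Fin n) := Fin.pos_iff_nonempty.1 hn1
    have hXpos : ∀ (i : ℕ) (j : Fin m), 0 < X i j ω :=
      fun i j => lt_of_lt_of_le (htmin j) (hω i j)
    have hSpos : ∀ j, 0 < ∑ k : Fin n, 1 / X k j ω := by
      intro j
      exact Finset.sum_pos (fun k _ => by have := hXpos k j; positivity) Finset.univ_nonempty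
    have hMlb : ∀ j, tmin j ≤ ⨅ i : Fin n, X i j ω :=
      fun j => le_ciInf (fun i => hω i j)
    have hden_lb : Sd ≤ ∑ j, ⨅ i : Fin n, X i j ω := by
      rw [hSdd]; exact Finset.sum_le_sum (fun j _ => hMlb j)
    have hden_pos : 0 < ∑ j, ⨅ i : Fin n, X i j ω := lt_of_lt_of_le hSd0 hden_lb
    have hSCPle : ∀ j, SCP n (fun i : Fin n => X i j ω)
        ≤ (n : ℝ) * (⨅ i : Fin n, X i j ω) := by
      intro j
      obtain ⟨i0, hi0⟩ := Finite.exists_min (fun i : Fin n => X i j ω)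
      have hbdd : BddBelow (Set.range fun i : Fin n => X i j ω) :=
        (Set.finite_range _).bddBelow
      have hMeq : (⨅ i : Fin n, X i j ω) = X i0 j ω :=
        le_antisymm (ciInf_le hbdd i0) (le_ciInf hi0)
      have hMpos : 0 < (⨅ i : Fin n, X i j ω) := by rw [hMeq]; exact hXpos i0 j
      have hSge : (⨅ i : Fin n, X i j ω)⁻¹ ≤ ∑ k : Fin n, 1 / X k j ω := by
        have h1 : (1 : ℝ) / X i0 j ω ≤ ∑ k : Fin n, 1 / X k j ω :=
          Finset.single_le_sum (f := fun k : Fin n => 1 / X k j ω)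
            (fun k _ => by have := hXpos k j; positivity) (Finset.mem_univ i0)
        rw [hMeq, inv_eq_one_div]
        exact h1
      rw [SCP, div_le_iff₀ (hSpos j)]
      have hone : 1 ≤ (⨅ i : Fin n, X i j ω) * (∑ k : Fin n, 1 / X k j ω) :=
        le_trans (le_of_eq (mul_inv_cancel₀ hMpos.ne').symm)
          (mul_le_mul_of_nonneg_left hSge hMpos.le)
      nlinarith [mul_le_mul_of_nonneg_left hone (Nat.cast_nonneg (α := ℝ) n)]
    have hSCPnn : ∀ j, 0 ≤ SCP n (fun i : Fin n => X i j ω) := by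
      intro j
      rw [SCP]
      exact div_nonneg (Nat.cast_nonneg n) (hSpos j).le
    constructor
    · exact div_nonneg (Finset.sum_nonneg fun j _ => hSCPnn j) hden_pos.le
    · rw [hf]
      rw [div_le_iff₀ hden_pos]
      calc (∑ j, SCP n (fun i : Fin n => X i j ω))
          ≤ ∑ j, (n : ℝ) * (⨅ i : Fin n, X i j ω) := Finset.sum_le_sum fun j _ => hSCPle j
        _ = (n : ℝ) * ∑ j, ⨅ i : Fin n, X i j ω := by rw [Finset.mul_sum]
  -- UI constants
  set b : Fin m → ℝ := fun j => tmin j + 1 with hbdef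
  have hbpos : ∀ j, 0 < b j := fun j => by have := htmin j; simp only [hbdef]; linarith
  set p : Fin m → ℝ := fun j => (D j (Set.Iic (b j))).toReal with hpdef
  have hp0 : ∀ j, 0 < p j := by
    intro j
    exact ENNReal.toReal_pos (hcdf j 1 one_pos).ne' (measure_ne_top _ _)
  have hpk : ∀ (j : Fin m) (k : ℕ), (ℙ (X k j ⁻¹' Set.Iic (b j))).toReal = p j := by
    intro j k
    rw [← Measure.map_apply (hmeas k j) measurableSet_Iic, hdist k j]
  set bad : Fin m → ℕ → Set Ω := fun j n =>
    {ω | (∑ k ∈ Finset.range n, if X k j ω ≤ b j then (1:ℝ) else 0)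
      < p j * ((n/2 : ℕ) : ℝ) / 2} with hbaddef
  have hbadmeas : ∀ j n, MeasurableSet (bad j n) := by
    intro j n
    apply measurableSet_lt ?_ measurable_const
    exact Finset.measurable_sum _ (fun k _ =>
      Measurable.ite ((hmeas k j) measurableSet_Iic) measurable_const measurable_const)
  have hbadprob : ∀ j n, 2 ≤ n → ℙ (bad j n)
      ≤ ENNReal.ofReal (256 / ((p j) ^ 4 * (n:ℝ) ^ 2)) := by
    intro j n hn
    exact aux_badprob (fun i => X i j) (fun i => hmeas i j) (hXiid j) (b j) (p j)
      (hp0 j) (fun k => hpk j k) n hn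
  set Knum : ℝ := ∑ j, 8 * b j / p j with hKnum
  have hKnum0 : 0 ≤ Knum := Finset.sum_nonneg fun j _ => by
    have := hbpos j; have := hp0 j; positivity
  set K₀ : ℝ := Knum / Sd with hK₀
  have hK₀0 : 0 ≤ K₀ := div_nonneg hKnum0 hSd0.le
  -- bound on the good event
  have hgood : ∀ n, 2 ≤ n → ∀ ω, (∀ i j, tmin j ≤ X i j ω) →
      (∀ j, ω ∉ bad j n) → f n ω ≤ K₀ := by
    intro n hn ω hω hgoodω
    haveI : Nonempty (Fin n) := Fin.pos_iff_nonempty.1 (by omega)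
    have hXpos : ∀ (i : ℕ) (j : Fin m), 0 < X i j ω :=
      fun i j => lt_of_lt_of_le (htmin j) (hω i j)
    have hh21 : 1 ≤ n / 2 := by omega
    have hh2r : (0:ℝ) < ((n/2 : ℕ) : ℝ) := by exact_mod_cast hh21
    have hn4 : (n:ℝ) ≤ 4 * ((n/2 : ℕ) : ℝ) := by exact_mod_cast (by omega : n ≤ 4 * (n/2))
    have hnum_le : (∑ j, SCP n (fun i : Fin n => X i j ω)) ≤ Knum := by
      rw [hKnum]
      apply Finset.sum_le_sum
      intro j _
      have hcount : p j * ((n/2 : ℕ) : ℝ) / 2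
          ≤ ∑ k ∈ Finset.range n, if X k j ω ≤ b j then (1:ℝ) else 0 :=
        le_of_not_gt (hgoodω j)
      have hterm : ∀ k, (if X k j ω ≤ b j then (1:ℝ) else 0) / b j ≤ (X k j ω)⁻¹ := by
        intro k
        by_cases hk : X k j ω ≤ b j
        · rw [if_pos hk, one_div]
          exact inv_anti₀ (hXpos k j) hk
        · rw [if_neg hk, zero_div]
          exact (inv_pos.2 (hXpos k j)).le
      have hSge : (p j * ((n/2 : ℕ) : ℝ) / 2) / b j ≤ ∑ k : Fin n, 1 / X k j ω := by
        calc (p j * ((n/2 : ℕ) : ℝ) / 2) / b j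
            ≤ (∑ k ∈ Finset.range n, if X k j ω ≤ b j then (1:ℝ) else 0) / b j := by
              gcongr
              exact (hbpos j).le
          _ = ∑ k ∈ Finset.range n, (if X k j ω ≤ b j then (1:ℝ) else 0) / b j :=
              Finset.sum_div _ _ _
          _ ≤ ∑ k ∈ Finset.range n, (X k j ω)⁻¹ := Finset.sum_le_sum fun k _ => hterm k
          _ = ∑ k : Fin n, 1 / X k j ω := by
              rw [← Fin.sum_univ_eq_sum_range (fun i => (X i j ω)⁻¹) n]
              simp [one_div]
      have hApos : 0 < (p j * ((n/2 : ℕ) : ℝ) / 2) / b j := by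
        have := hp0 j; have := hbpos j; positivity
      have hSpos : 0 < ∑ k : Fin n, 1 / X k j ω := lt_of_lt_of_le hApos hSge
      have h1 : SCP n (fun i : Fin n => X i j ω)
          ≤ (n : ℝ) / ((p j * ((n/2 : ℕ) : ℝ) / 2) / b j) := by
        rw [SCP, div_le_div_iff₀ hSpos hApos]
        exact mul_le_mul_of_nonneg_left hSge (Nat.cast_nonneg n)
      refine h1.trans ?_
      rw [div_le_div_iff₀ hApos (hp0 j)]
      have hb' := hbpos j
      have hp' := hp0 j
      have key : 8 * b j * (p j * ((n/2 : ℕ) : ℝ) / 2 / b j) = 4 * (p j * ((n/2 : ℕ) : ℝ)) := by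
        field_simp
        ring
      rw [key]
      nlinarith [mul_le_mul_of_nonneg_right hn4 hp'.le]
    have hMlb : ∀ j, tmin j ≤ ⨅ i : Fin n, X i j ω :=
      fun j => le_ciInf (fun i => hω i j)
    have hden_lb : Sd ≤ ∑ j, ⨅ i : Fin n, X i j ω := by
      rw [hSdd]; exact Finset.sum_le_sum (fun j _ => hMlb j)
    rw [hf, hK₀]
    exact div_le_div₀ hKnum0 hnum_le hSd0 hden_lb
  -- uniform integrability
  have hui : UnifIntegrable f 1 ℙ := by
    have hUI : UniformIntegrable f 1 ℙ := by
      refine uniformIntegrable_of le_rfl ENNReal.one_ne_top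
        (fun n => (hf_meas n).aestronglyMeasurable) ?_
      intro ε hε
      set c₀ : ℝ := ∑ j, 256 / (p j) ^ 4 with hc₀def
      have hc₀0 : 0 ≤ c₀ := Finset.sum_nonneg fun j _ => by have := hp0 j; positivity
      obtain ⟨N0, hN0⟩ := exists_nat_ge (c₀ / ε)
      set N : ℕ := max N0 2 with hN
      set Creal : ℝ := max (K₀ + 1) (N : ℝ) with hCreal
      have hCreal0 : 0 < Creal := lt_of_lt_of_le (by linarith) (le_max_left _ _)
      refine ⟨Creal.toNNReal, fun n => ?_⟩
      by_cases hcase : (n : ℝ) < Creal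
      · have hzero : {x | Creal.toNNReal ≤ ‖f n x‖₊}.indicator (f n) =ᵐ[ℙ] 0 := by
          filter_upwards [hlb_all] with ω hω
          have hb' := h_f_bounds n ω hω
          simp only [Pi.zero_apply]
          rw [Set.indicator_apply_eq_zero]
          intro hmem
          exfalso
          simp only [Set.mem_setOf_eq] at hmem
          have h1 : Creal ≤ ‖f n ω‖ := by
            have h2 := NNReal.coe_le_coe.2 hmem
            rwa [Real.coe_toNNReal _ hCreal0.le, coe_nnnorm] at h2
          rw [Real.norm_eq_abs, abs_of_nonneg hb'.1] at h1
          linarith [hb'.2]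
        rw [eLpNorm_congr_ae hzero, eLpNorm_zero]
        exact zero_le
      · push_neg at hcase
        have hNn : (N : ℝ) ≤ (n : ℝ) := le_trans (le_max_right _ _) hcase
        have hNn' : N ≤ n := by exact_mod_cast hNn
        have hn2 : 2 ≤ n := le_trans (le_max_right N0 2) hNn'
        have hnN0 : (N0 : ℝ) ≤ (n : ℝ) := by
          have : N0 ≤ n := le_trans (le_max_left N0 2) hNn'
          exact_mod_cast this
        have hnpos : (0:ℝ) < (n:ℝ) := by
          have : (0:ℕ) < n := by omega
          exact_mod_cast this
        set BB : Set Ω := ⋃ j, bad j n with hBB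
        have hBBm : MeasurableSet BB := MeasurableSet.iUnion fun j => hbadmeas j n
        rw [eLpNorm_one_eq_lintegral_enorm]
        have hpoint : ∀ᵐ ω ∂(ℙ : Measure Ω),
            (‖{x | Creal.toNNReal ≤ ‖f n x‖₊}.indicator (f n) ω‖₊ : ℝ≥0∞)
            ≤ BB.indicator (fun _ => (n : ℝ≥0∞)) ω := by
          filter_upwards [hlb_all] with ω hω
          by_cases hmem : ω ∈ {x | Creal.toNNReal ≤ ‖f n x‖₊}
          · have hfb := h_f_bounds n ω hω
            have hBBmem : ω ∈ BB := by
              by_contra hnot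
              have hgoodω : ∀ j, ω ∉ bad j n := fun j hj =>
                hnot (Set.mem_iUnion.2 ⟨j, hj⟩)
              have hle := hgood n hn2 ω hω hgoodω
              simp only [Set.mem_setOf_eq] at hmem
              have h1 : Creal ≤ ‖f n ω‖ := by
                have h2 := NNReal.coe_le_coe.2 hmem
                rwa [Real.coe_toNNReal _ hCreal0.le, coe_nnnorm] at h2
              rw [Real.norm_eq_abs, abs_of_nonneg hfb.1] at h1
              have h2 : K₀ + 1 ≤ Creal := le_max_left _ _
              linarith
            rw [Set.indicator_of_mem hmem, Set.indicator_of_mem hBBmem]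
            have hle2 : ‖f n ω‖ ≤ (n:ℝ) := by
              rw [Real.norm_eq_abs, abs_of_nonneg hfb.1]; exact hfb.2
            calc (‖f n ω‖₊ : ℝ≥0∞) = ENNReal.ofReal ‖f n ω‖ :=
                  (ofReal_norm _).symm
              _ ≤ ENNReal.ofReal (n:ℝ) := ENNReal.ofReal_le_ofReal hle2
              _ = (n : ℝ≥0∞) := ENNReal.ofReal_natCast n
          · rw [Set.indicator_of_notMem hmem]
            simp
        calc ∫⁻ ω, (‖{x | Creal.toNNReal ≤ ‖f n x‖₊}.indicator (f n) ω‖₊ : ℝ≥0∞) ∂ℙ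
            ≤ ∫⁻ ω, BB.indicator (fun _ => (n : ℝ≥0∞)) ω ∂ℙ := lintegral_mono_ae hpoint
          _ = (n : ℝ≥0∞) * ℙ BB := lintegral_indicator_const hBBm _
          _ ≤ (n : ℝ≥0∞) * ∑ j, ENNReal.ofReal (256 / ((p j) ^ 4 * (n:ℝ) ^ 2)) := by
              have hm1 := measure_iUnion_le (μ := (ℙ : Measure Ω)) (fun j => bad j n)
              rw [tsum_fintype] at hm1
              exact mul_le_mul_right
                (hm1.trans (Finset.sum_le_sum fun j _ => hbadprob j n hn2)) _
          _ ≤ ENNReal.ofReal ε := by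
              rw [← ENNReal.ofReal_sum_of_nonneg (fun j _ => by have := hp0 j; positivity),
                ← ENNReal.ofReal_natCast n,
                ← ENNReal.ofReal_mul (Nat.cast_nonneg n)]
              apply ENNReal.ofReal_le_ofReal
              have hsum : (∑ j, 256 / ((p j) ^ 4 * (n:ℝ) ^ 2)) = c₀ / (n:ℝ) ^ 2 := by
                rw [hc₀def, Finset.sum_div]
                exact Finset.sum_congr rfl fun j _ => by rw [div_div]
              rw [hsum]
              have heq2 : (n:ℝ) * (c₀ / (n:ℝ) ^ 2) = c₀ / (n:ℝ) := by
                field_simp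
              rw [heq2, div_le_iff₀ hnpos]
              have h1 : c₀ ≤ ε * N0 := by
                rw [div_le_iff₀ hε] at hN0
                linarith
              nlinarith
    exact hUI.2.1
  -- conclusion via Vitali
  have hint_f : ∀ n, Integrable (f n) ℙ := by
    intro n
    refine Integrable.mono' (integrable_const ((n:ℝ)))
      (hf_meas n).aestronglyMeasurable ?_
    filter_upwards [hlb_all] with ω hω
    have hb' := h_f_bounds n ω hω
    rw [Real.norm_eq_abs, abs_of_nonneg hb'.1]; exact hb'.2
  have hLp := tendsto_Lp_finite_of_tendsto_ae (μ := (ℙ : Measure Ω)) le_rfl ENNReal.one_ne_top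
    (fun n => (hf_meas n).aestronglyMeasurable) (memLp_const L) hui hae
  have hL1 : Tendsto (fun n => ∫⁻ x, (‖f n x - L‖₊ : ℝ≥0∞) ∂ℙ) atTop (nhds 0) := by
    have h2 : ∀ n, eLpNorm (f n - fun _ => L) 1 ℙ = ∫⁻ x, (‖f n x - L‖₊ : ℝ≥0∞) ∂ℙ := by
      intro n
      rw [eLpNorm_one_eq_lintegral_enorm]
      rfl
    simp_rw [h2] at hLp
    exact hLp
  have hfinal := tendsto_integral_of_L1 (μ := (ℙ : Measure Ω)) (fun _ : Ω => L)
    (integrable_const L).aestronglyMeasurable (Filter.Eventually.of_forall hint_f) hL1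
  rw [integral_const, probReal_univ, one_smul] at hfinal
  have hr' : r = fun n => ∫ ω, f n ω ∂ℙ := funext fun n => (hr n).trans rfl
  rw [hr']
  exact hfinal
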